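/- Let ω be a continuous antisymmetric bilinear form on h^0 of the form ω(ξ,η) = ⟨J ξ, η⟩ with J = i + Υ, where Υ is a bounded antisymmetric operator with ‖Υ‖ < 1. Suppose ω(ξ,η) = 0 for all ξ, η in a real subspace L satisfying L ⊂ L^⊥ω and iL = L^⊥ (orthogonal complement in the real inner product), where L^⊥ω = {ξ : ω(ξ,η)=0 ∀η ∈ L}. Then L^⊥ω = L, i.e., L is Lagrangian for ω. -/

import Mathlib

noncomputable section

/-- The space `h⁰`: the `l²` space of complex sequences, viewed as a real Hilbert space with
`⟨u, w⟩ = Re Σ u_j conj w_j`. -/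
abbrev H0 := lp (fun _ : ℕ => ℂ) 2

/-- The real scalar product on `h⁰`. -/
def rIn (u w : H0) : ℝ := (inner (𝕜 := ℂ) u w : ℂ).re

lemma rIn_eq_real_inner (u w : H0) : rIn u w = (inner (𝕜 := ℝ) u w : ℝ) := by
  rw [rIn, lp.inner_eq_tsum, lp.inner_eq_tsum (𝕜 := ℝ),
    Complex.re_tsum (lp.summable_inner u w)]
  exact tsum_congr fun i => rfl

lemma rIn_I_smul_right (x w : H0) : rIn x (Complex.I • w) = -rIn (Complex.I • x) w := by
  rw [rIn, rIn, inner_smul_right, inner_smul_left, Complex.conj_I]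
  simp [Complex.mul_re]

/-- Let `ω(ξ,η) = ⟨Jξ, η⟩` with `J = i + Υ`, `Υ` bounded antisymmetric with
`‖Υ‖ < 1`.  If `ω` vanishes on a real subspace `L` with `L ⊆ L^{⊥ω}` and `iL = L^⊥`, then
`L^{⊥ω} = L`, i.e. `L` is Lagrangian for `ω`. -/
theorem lagrangian_subspace (Υ : H0 →L[ℝ] H0) (hnorm : ‖Υ‖ < 1)
    (hanti : ∀ ξ η : H0, rIn (Υ ξ) η = -rIn (Υ η) ξ)
    (L : Submodule ℝ H0)
    -- `ω` vanishes on `L`, i.e. `L ⊆ L^{⊥ω}`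
    (hiso : ∀ ξ ∈ L, ∀ η ∈ L, rIn (Complex.I • ξ + Υ ξ) η = 0)
    -- `iL = L^⊥` for the real scalar product
    (hperp : {w : H0 | ∀ x ∈ L, rIn x w = 0} = {w : H0 | ∃ x ∈ L, w = Complex.I • x}) :
    {ξ : H0 | ∀ η ∈ L, rIn (Complex.I • ξ + Υ ξ) η = 0} = (↑L : Set H0) := by
  -- characterization of the orthogonal complement
  have hmemperp : ∀ w : H0, w ∈ Lᗮ ↔ ∃ x ∈ L, w = Complex.I • x := by
    intro w
    rw [Submodule.mem_orthogonal]
    have h := Set.ext_iff.mp hperp w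
    simp only [Set.mem_setOf_eq] at h
    constructor
    · intro hw
      exact h.mp fun x hx => by rw [rIn_eq_real_inner]; exact hw x hx
    · intro hw x hx
      have := h.mpr hw x hx
      rwa [rIn_eq_real_inner] at this
  -- L equals its double orthogonal complement, hence closed
  have hdouble : Lᗮᗮ = L := by
    refine le_antisymm ?_ (Submodule.le_orthogonal_orthogonal L)
    intro w hw
    have hIw : Complex.I • w ∈ Lᗮ := by
      rw [Submodule.mem_orthogonal]
      intro x hx
      have hIx : Complex.I • x ∈ Lᗮ := (hmemperp _).2 ⟨x, hx, rfl⟩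
      have h0 : (inner (𝕜 := ℝ) (Complex.I • x) w : ℝ) = 0 :=
        (Submodule.mem_orthogonal _ _).1 hw _ hIx
      rw [← rIn_eq_real_inner, rIn_I_smul_right]
      rw [← rIn_eq_real_inner] at h0
      rw [h0, neg_zero]
    obtain ⟨x, hx, hxe⟩ := (hmemperp _).1 hIw
    have : w = x := smul_right_injective H0 Complex.I_ne_zero hxe
    rwa [this]
  have hclosed : IsClosed (L : Set H0) := by
    have := Submodule.isClosed_orthogonal (𝕜 := ℝ) (E := H0) (K := Lᗮ)
    rwa [hdouble] at this
  haveI : CompleteSpace L := hclosed.completeSpace_coe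
  ext ξ
  simp only [Set.mem_setOf_eq, SetLike.mem_coe]
  constructor
  · intro hξ
    set a : H0 := (L.orthogonalProjectionOnto ξ : H0) with ha
    have haL : a ∈ L := (L.orthogonalProjectionOnto ξ).2
    have hb : ξ - a ∈ Lᗮ := Submodule.sub_starProjection_mem_orthogonal (K := L) ξ
    obtain ⟨x, hx, hbx⟩ := (hmemperp _).1 hb
    -- ω vanishes on ξ - a against L
    have hωb : ∀ η ∈ L, rIn (Complex.I • (ξ - a) + Υ (ξ - a)) η = 0 := by
      intro η hη
      have h1 := hξ η hη
      have h2 := hiso a haL η hη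
      have hsplit : Complex.I • (ξ - a) + Υ (ξ - a)
          = (Complex.I • ξ + Υ ξ) - (Complex.I • a + Υ a) := by
        rw [smul_sub, map_sub]; abel
      rw [hsplit, rIn_eq_real_inner, inner_sub_left, ← rIn_eq_real_inner,
        ← rIn_eq_real_inner, h1, h2, sub_zero]
    -- apply at η = x
    have h0 := hωb x hx
    rw [hbx, smul_smul, Complex.I_mul_I, neg_one_smul, rIn_eq_real_inner,
      inner_add_left, inner_neg_left] at h0
    have hb1 : (inner (𝕜 := ℝ) (Υ (Complex.I • x)) x : ℝ) ≤ ‖Υ (Complex.I • x)‖ * ‖x‖ :=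
      real_inner_le_norm _ _
    have hb2 : ‖Υ (Complex.I • x)‖ ≤ ‖Υ‖ * ‖x‖ := by
      have := Υ.le_opNorm (Complex.I • x)
      rwa [norm_smul, Complex.norm_I, one_mul] at this
    have hsq : (inner (𝕜 := ℝ) x x : ℝ) = ‖x‖ ^ 2 := real_inner_self_eq_norm_sq x
    have hx2 : ‖x‖ ^ 2 ≤ 0 := by
      nlinarith [mul_le_mul_of_nonneg_right hb2 (norm_nonneg x), sq_nonneg ‖x‖]
    have hx0 : x = 0 := by
      have : ‖x‖ = 0 := by nlinarith [norm_nonneg x, sq_nonneg ‖x‖]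
      exact norm_eq_zero.mp this
    have hba : ξ - a = 0 := by rw [hbx, hx0, smul_zero]
    have : ξ = a := by rwa [sub_eq_zero] at hba
    rw [this]; exact haL
  · intro hξ
    exact hiso ξ hξ
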